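/- Let H and 𝒦 be separable complex Hilbert spaces, U : ℝ → U(H) a strongly continuous unitary representation, Λ the translation representation (Λ(t)Φ)(s) = Φ(s−t) on L²(ℝ;𝒦), W : H → L²(ℝ;𝒦) an isometry with W U(t) = Λ(t) W and WW*Λ(t) = Λ(t)WW* for all t, β > 0, and (ψ_n)_{n≥1} an orthonormal basis of 𝒦 (with ψ_n = 0 for n exceeding dim 𝒦 if 𝒦 is finite dimensional). For compact K ⊆ ℝ and n ∈ ℕ let Ψ_{K,n} ∈ L²(ℝ;𝒦) be Ψ_{K,n}(s) = Φ_K^{(β)}(s)·ψ_n, where Φ_K^{(β)}(s) = (2π)^{-1/2} ∫_K e^{-isξ} e^{-βξ/2} dξ, and define the weight φ_β : B(H)⁺ → [0,∞] by φ_β(x) := sup over compact K ⊆ ℝ and N ∈ ℕ of Σ_{n=1}^{N} ∫_ℝ ⟨W*Ψ_{K,n}, U(t) x U(t)* W*Ψ_{K,n}⟩ dt. Then φ_β is normal: for every norm-bounded monotone increasing net (x_α) of positive operators in B(H) with least upper bound x in the Loewner order, sup_α φ_β(x_α) = φ_β(x). -/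

import Mathlib

open MeasureTheory Filter
open scoped ENNReal NNReal Topology

local notation "⟪" x ", " y "⟫_ℂ" => @inner ℂ _ _ x y

noncomputable section

/-- `phiFn β A` is the function `Φ_A^{(β)}(s) = (2π)^{-1/2} ∫_A e^{-isξ} e^{-βξ/2} dξ`,
the inverse Fourier transform of `χ_A(ξ) e^{-βξ/2}`. -/
def phiFn (β : ℝ) (A : Set ℝ) (s : ℝ) : ℂ :=
  (((Real.sqrt (2 * Real.pi))⁻¹ : ℝ) : ℂ) *
    ∫ ξ in A, Complex.exp (-(Complex.I * (s : ℂ) * (ξ : ℂ)) - ((β : ℂ) * (ξ : ℂ)) / 2)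

/-- The weight `φ_β(x) = sup_{K,N} Σ_{n<N} ∫_ℝ ⟨W*Ψ_{K,n}, U(t) x U(t)* W*Ψ_{K,n}⟩ dt`,
expressed through the vectors `θ A n = W*Ψ_{A,n}`. -/
def weightPhi {H : Type*} [NormedAddCommGroup H] [InnerProductSpace ℂ H] [CompleteSpace H]
    (U : ℝ → (H →L[ℂ] H)) (θ : Set ℝ → ℕ → H) (x : H →L[ℂ] H) : ℝ≥0∞ :=
  ⨆ (A : {A : Set ℝ // IsCompact A}) (N : ℕ), ∑ n ∈ Finset.range N,
    ∫⁻ t : ℝ, ENNReal.ofReal (⟪θ A.1 n, (U t * x * star (U t)) (θ A.1 n)⟫_ℂ).re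

section Aux

variable {H : Type*} [NormedAddCommGroup H] [InnerProductSpace ℂ H] [CompleteSpace H]

private lemma aux_re_nonneg {T : H →L[ℂ] H} (hT : T.IsPositive) (v : H) :
    0 ≤ (⟪v, T v⟫_ℂ).re :=
  by have h := (Complex.le_def.mp (hT.inner_nonneg_right v)).1; simpa using h

private lemma aux_mono {S T : H →L[ℂ] H} (h : (T - S).IsPositive) (v : H) :
    (⟪v, S v⟫_ℂ).re ≤ (⟪v, T v⟫_ℂ).re := by
  have h0 := aux_re_nonneg h v
  simp only [ContinuousLinearMap.sub_apply, inner_sub_right, Complex.sub_re] at h0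
  linarith

private lemma aux_sq {T : H →L[ℂ] H} (hT : T.IsPositive) (v : H) :
    ‖T v‖ ^ 2 ≤ ‖T‖ * (⟪v, T v⟫_ℂ).re := by
  set a := (⟪v, T v⟫_ℂ).re with ha
  set b := ‖T v‖ ^ 2 with hb
  set c := (⟪T v, T (T v)⟫_ℂ).re with hc
  have hTadj : ContinuousLinearMap.adjoint T = T := by
    rw [← ContinuousLinearMap.star_eq_adjoint]; exact hT.isSelfAdjoint
  have hreTT : (⟪v, T (T v)⟫_ℂ).re = b := by
    have h1 : ⟪v, T (T v)⟫_ℂ = ⟪T v, T v⟫_ℂ := by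
      rw [← ContinuousLinearMap.adjoint_inner_left, hTadj]
    rw [h1, hb]
    simpa using inner_self_eq_norm_sq (𝕜 := ℂ) (T v)
  have hQ : ∀ t : ℝ, 0 ≤ c * (t * t) + (2 * b) * t + a := by
    intro t
    have h0 := aux_re_nonneg hT (v + (t : ℂ) • T v)
    have hexp : ⟪v + (t : ℂ) • T v, T (v + (t : ℂ) • T v)⟫_ℂ
        = ⟪v, T v⟫_ℂ + (t : ℂ) * ⟪v, T (T v)⟫_ℂ + (t : ℂ) * ⟪T v, T v⟫_ℂ
          + (t : ℂ) * ((t : ℂ) * ⟪T v, T (T v)⟫_ℂ) := by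
      simp only [map_add, _root_.map_smul, inner_add_left, inner_add_right, inner_smul_left,
        inner_smul_right, Complex.conj_ofReal]
      ring
    rw [hexp] at h0
    simp only [Complex.add_re, Complex.re_ofReal_mul, hreTT] at h0
    have hTvTv : ((⟪T v, T v⟫_ℂ)).re = b := by
      rw [hb]
      simpa using inner_self_eq_norm_sq (𝕜 := ℂ) (T v)
    rw [hTvTv] at h0
    rw [← ha, ← hc] at h0
    nlinarith [h0]
  have hd := discrim_le_zero hQ
  rw [discrim] at hd
  have hca : b ^ 2 ≤ c * a := by nlinarith
  have hcb : c ≤ ‖T‖ * b := by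
    calc c ≤ ‖⟪T v, T (T v)⟫_ℂ‖ := by
          simpa using RCLike.re_le_norm (⟪T v, T (T v)⟫_ℂ)
    _ ≤ ‖T v‖ * ‖T (T v)‖ := norm_inner_le_norm _ _
    _ ≤ ‖T v‖ * (‖T‖ * ‖T v‖) := by
          gcongr; exact T.le_opNorm _
    _ = ‖T‖ * b := by rw [hb]; ring
  have ha0 : 0 ≤ a := aux_re_nonneg hT v
  have hb0 : 0 ≤ b := by rw [hb]; positivity
  rcases eq_or_lt_of_le hb0 with h | h
  · rw [← h]
    positivity
  · have hbb : b * b ≤ (‖T‖ * a) * b := by nlinarith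
    calc b = b * b / b := by field_simp
    _ ≤ (‖T‖ * a) * b / b := by gcongr
    _ = ‖T‖ * a := by field_simp

private lemma aux_sub_pos {S T : H →L[ℂ] H} (hS : S.IsPositive) (hT : T.IsPositive)
    (h : ∀ v, (⟪v, T v⟫_ℂ).re ≤ (⟪v, S v⟫_ℂ).re) : (S - T).IsPositive := by
  rw [ContinuousLinearMap.isPositive_iff_complex]
  intro v
  obtain ⟨hS1, _⟩ := (ContinuousLinearMap.isPositive_iff_complex S).mp hS v
  obtain ⟨hT1, _⟩ := (ContinuousLinearMap.isPositive_iff_complex T).mp hT v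
  have hflip : ∀ R : H →L[ℂ] H, (⟪R v, v⟫_ℂ).re = (⟪v, R v⟫_ℂ).re := by
    intro R
    simpa using inner_re_symm (𝕜 := ℂ) (R v) v
  have hsub : ⟪(S - T) v, v⟫_ℂ = ⟪S v, v⟫_ℂ - ⟪T v, v⟫_ℂ := by
    simp [ContinuousLinearMap.sub_apply, inner_sub_left]
  constructor
  · rw [hsub, ← hS1, ← hT1]
    simp
  · have hre : (⟪(S - T) v, v⟫_ℂ).re = (⟪S v, v⟫_ℂ).re - (⟪T v, v⟫_ℂ).re := by
      rw [hsub]; simp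
    simp only [RCLike.re_to_complex] at *
    rw [hre, hflip S, hflip T]
    have := h v
    linarith

private lemma netlimit {ι : Type*} [Preorder ι] [IsDirected ι (· ≤ ·)] [Nonempty ι]
    (T : ι → (H →L[ℂ] H)) (C : ℝ)
    (hmono : ∀ i j, i ≤ j → (T j - T i).IsPositive)
    (hbdd : ∀ i, ‖T i‖ ≤ C) :
    ∃ y : H →L[ℂ] H, (∀ i, (y - T i).IsPositive) ∧
      ∀ v : H, Tendsto (fun i => T i v) atTop (𝓝 (y v)) := by
  have hC0 : 0 ≤ C := le_trans (norm_nonneg _) (hbdd (Classical.arbitrary ι))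
  have hamono : ∀ v : H, Monotone fun i => (⟪v, T i v⟫_ℂ).re :=
    fun v i j h => aux_mono (hmono i j h) v
  have habdd : ∀ v : H, BddAbove (Set.range fun i => (⟪v, T i v⟫_ℂ).re) := by
    intro v
    refine ⟨C * ‖v‖ ^ 2, Set.forall_mem_range.mpr fun i => ?_⟩
    calc (⟪v, T i v⟫_ℂ).re ≤ ‖⟪v, T i v⟫_ℂ‖ := by
          simpa using RCLike.re_le_norm (⟪v, T i v⟫_ℂ)
    _ ≤ ‖v‖ * ‖T i v‖ := norm_inner_le_norm _ _
    _ ≤ ‖v‖ * (C * ‖v‖) := by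
        refine mul_le_mul_of_nonneg_left ?_ (norm_nonneg v)
        exact ((T i).le_opNorm v).trans (mul_le_mul_of_nonneg_right (hbdd i) (norm_nonneg v))
    _ = C * ‖v‖ ^ 2 := by ring
  have hest : ∀ (v : H) (i j : ι), i ≤ j →
      ‖T j v - T i v‖ ^ 2 ≤ (2 * C + 1) * ((⟪v, T j v⟫_ℂ).re - (⟪v, T i v⟫_ℂ).re) := by
    intro v i j h
    have h1 := aux_sq (hmono i j h) v
    have h2 : ‖T j - T i‖ ≤ 2 * C + 1 := by
      calc ‖T j - T i‖ ≤ ‖T j‖ + ‖T i‖ := norm_sub_le _ _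
      _ ≤ 2 * C + 1 := by have := hbdd i; have := hbdd j; linarith
    have h3 : (⟪v, (T j - T i) v⟫_ℂ).re = (⟪v, T j v⟫_ℂ).re - (⟪v, T i v⟫_ℂ).re := by
      simp [ContinuousLinearMap.sub_apply, inner_sub_right]
    have h5 : 0 ≤ (⟪v, (T j - T i) v⟫_ℂ).re := aux_re_nonneg (hmono i j h) v
    have h4 : (T j - T i) v = T j v - T i v := rfl
    rw [h4] at h1 h5 h3
    rw [h3] at h1 h5
    calc ‖T j v - T i v‖ ^ 2
        ≤ ‖T j - T i‖ * ((⟪v, T j v⟫_ℂ).re - (⟪v, T i v⟫_ℂ).re) := h1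
    _ ≤ (2 * C + 1) * ((⟪v, T j v⟫_ℂ).re - (⟪v, T i v⟫_ℂ).re) :=
        mul_le_mul_of_nonneg_right h2 h5
  have hconv : ∀ v : H, ∃ l : H, Tendsto (fun i => T i v) atTop (𝓝 l) := by
    intro v
    set L := ⨆ i, (⟪v, T i v⟫_ℂ).re with hL
    have htend : Tendsto (fun i => (⟪v, T i v⟫_ℂ).re) atTop (𝓝 L) :=
      tendsto_atTop_ciSup (hamono v) (habdd v)
    have hcauchy : Cauchy (Filter.map (fun i => T i v) atTop) := by
      rw [Metric.uniformity_basis_dist.cauchy_iff]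
      refine ⟨Filter.map_neBot, fun ε hε => ?_⟩
      have h2C : (0:ℝ) < 2 * C + 1 := by linarith
      set δ := ε ^ 2 / (4 * (2 * C + 1)) with hδdef
      have hδ : 0 < δ := by positivity
      have hev : ∀ᶠ i in atTop, L - δ < (⟪v, T i v⟫_ℂ).re :=
        htend.eventually (eventually_gt_nhds (by linarith))
      obtain ⟨i0, -, hi0⟩ := atTop_basis.mem_iff.mp hev
      refine ⟨(fun i => T i v) '' Set.Ici i0,
        Filter.image_mem_map (Filter.Ici_mem_atTop i0), ?_⟩
      rintro _ ⟨i, hi, rfl⟩ _ ⟨i', hi', rfl⟩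
      obtain ⟨k, hik, hi'k⟩ := exists_ge_ge i i'
      have key : ∀ a : ι, i0 ≤ a → a ≤ k → ‖T k v - T a v‖ < ε / 2 := by
        intro a ha hak
        have h1 := hest v a k hak
        have h2 : (⟪v, T k v⟫_ℂ).re ≤ L := le_ciSup (habdd v) k
        have h3 : L - δ < (⟪v, T a v⟫_ℂ).re := hi0 ha
        have h4 : ‖T k v - T a v‖ ^ 2 < (2 * C + 1) * δ :=
          lt_of_le_of_lt h1 (by nlinarith)
        have h5 : (2 * C + 1) * δ = ε ^ 2 / 4 := by
          rw [hδdef]; field_simp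
        nlinarith [norm_nonneg (T k v - T a v)]
      have d1 := key i hi hik
      have d2 := key i' hi' hi'k
      calc dist (T i v) (T i' v) ≤ dist (T i v) (T k v) + dist (T k v) (T i' v) :=
            dist_triangle _ _ _
      _ < ε / 2 + ε / 2 := by
          rw [dist_eq_norm, dist_eq_norm, norm_sub_rev]
          exact add_lt_add d1 d2
      _ = ε := by ring
    exact cauchy_map_iff_exists_tendsto.mp hcauchy
  choose g hg using hconv
  have hgadd : ∀ u v : H, g (u + v) = g u + g v := by
    intro u v
    refine tendsto_nhds_unique ?_ ((hg u).add (hg v))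
    simpa [map_add] using hg (u + v)
  have hgsmul : ∀ (c : ℂ) (v : H), g (c • v) = c • g v := by
    intro c v
    refine tendsto_nhds_unique ?_ ((hg v).const_smul c)
    simpa [_root_.map_smul] using hg (c • v)
  have hgbound : ∀ v : H, ‖g v‖ ≤ C * ‖v‖ := by
    intro v
    refine le_of_tendsto (hg v).norm (Filter.Eventually.of_forall fun i => ?_)
    exact ((T i).le_opNorm v).trans (mul_le_mul_of_nonneg_right (hbdd i) (norm_nonneg v))
  let y : H →L[ℂ] H :=
    LinearMap.mkContinuous
      { toFun := g, map_add' := hgadd, map_smul' := fun c v => hgsmul c v } C hgbound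
  have hyapp : ∀ v, y v = g v := fun v => rfl
  refine ⟨y, ?_, fun v => by rw [hyapp]; exact hg v⟩
  intro i
  rw [ContinuousLinearMap.isPositive_iff_complex]
  intro v
  have hten : Tendsto (fun j => ⟪(T j - T i) v, v⟫_ℂ) atTop (𝓝 ⟪(y - T i) v, v⟫_ℂ) := by
    have h1 : Tendsto (fun j => T j v - T i v) atTop (𝓝 (y v - T i v)) := by
      rw [hyapp]; exact (hg v).sub tendsto_const_nhds
    have h2 : Tendsto (fun j => ⟪T j v - T i v, v⟫_ℂ) atTop (𝓝 ⟪y v - T i v, v⟫_ℂ) :=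
      h1.inner tendsto_const_nhds
    simpa [ContinuousLinearMap.sub_apply] using h2
  have hev : ∀ᶠ j in atTop, i ≤ j := eventually_ge_atTop i
  constructor
  · have him : ∀ᶠ j in atTop, (⟪(T j - T i) v, v⟫_ℂ).im = 0 := by
      refine hev.mono fun j hj => ?_
      have h1 := ((ContinuousLinearMap.isPositive_iff_complex _).mp (hmono i j hj) v).1
      rw [← h1]
      simp
    have himy : (⟪(y - T i) v, v⟫_ℂ).im = 0 := by
      have h1 : Tendsto (fun j => (⟪(T j - T i) v, v⟫_ℂ).im) atTop
          (𝓝 ((⟪(y - T i) v, v⟫_ℂ).im)) := (Complex.continuous_im.tendsto _).comp hten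
      have h0 : Tendsto (fun j => (⟪(T j - T i) v, v⟫_ℂ).im) atTop (𝓝 0) :=
        tendsto_const_nhds.congr' (him.mono fun j hj => hj.symm)
      exact tendsto_nhds_unique h1 h0
    have himy' : (⟪y v - T i v, v⟫_ℂ).im = 0 := by
      simpa [ContinuousLinearMap.sub_apply] using himy
    apply Complex.ext
    · simp
    · simp [ContinuousLinearMap.sub_apply, himy']
  · have hre : Tendsto (fun j => (⟪(T j - T i) v, v⟫_ℂ).re) atTop
        (𝓝 ((⟪(y - T i) v, v⟫_ℂ).re)) := (Complex.continuous_re.tendsto _).comp hten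
    refine ge_of_tendsto hre (hev.mono fun j hj => ?_)
    exact (Complex.le_def.mp ((hmono i j hj).inner_nonneg_left v)).1

private lemma ofReal_ciSup_nat {a : ℕ → ℝ} (hm : Monotone a) (hb : BddAbove (Set.range a)) :
    ENNReal.ofReal (⨆ k, a k) = ⨆ k, ENNReal.ofReal (a k) :=
  tendsto_nhds_unique
    ((ENNReal.continuous_ofReal.tendsto _).comp (tendsto_atTop_ciSup hm hb))
    (tendsto_atTop_iSup fun k l h => ENNReal.ofReal_le_ofReal (hm h))

end Aux

/-- In the setting of a compactly stabilised QRF for `ℝ` — a strongly continuous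
unitary one-parameter group `U` on a separable Hilbert space `H`, dilated by an isometry
`W : H → L²(ℝ;F)` intertwining `U` with the translation representation `Λ` and whose range
projection commutes with `Λ` — the weight `φ_β` (built from the vectors
`θ A n = W*(Φ_A^{(β)} ⊗ e_n)` for an orthonormal basis `e` of `F`, compact `A ⊆ ℝ`) is
normal: for every norm-bounded monotone increasing net of positive operators with least upper
bound `x` in the Loewner order, `sup_i φ_β(x_i) = φ_β(x)`. -/
theorem stmt14 {H F : Type*}
    [NormedAddCommGroup H] [InnerProductSpace ℂ H] [CompleteSpace H] [SecondCountableTopology H]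
    [NormedAddCommGroup F] [InnerProductSpace ℂ F] [CompleteSpace F] [SecondCountableTopology F]
    (U : ℝ → (H →L[ℂ] H))
    (hU0 : U 0 = 1) (hUadd : ∀ s t : ℝ, U (s + t) = U s * U t)
    (hUuni : ∀ t : ℝ, U t ∈ unitary (H →L[ℂ] H))
    (hUcont : ∀ ψ : H, Continuous fun t : ℝ => U t ψ)
    (Λ : ℝ → (Lp F 2 (volume : Measure ℝ) →L[ℂ] Lp F 2 (volume : Measure ℝ)))
    (hΛ : ∀ (t : ℝ) (Φ : Lp F 2 (volume : Measure ℝ)),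
        (Λ t Φ : ℝ → F) =ᵐ[volume] fun s => Φ (s - t))
    (W : H →L[ℂ] Lp F 2 (volume : Measure ℝ))
    (hWiso : ∀ ψ : H, ‖W ψ‖ = ‖ψ‖)
    (hWU : ∀ t : ℝ, W ∘L U t = Λ t ∘L W)
    (hWcomm : ∀ t : ℝ,
        (W ∘L ContinuousLinearMap.adjoint W) ∘L Λ t
          = Λ t ∘L (W ∘L ContinuousLinearMap.adjoint W))
    (β : ℝ) (hβ : 0 < β)
    (e : ℕ → F)
    (he_orth : ∀ m n : ℕ, m ≠ n → ⟪e m, e n⟫_ℂ = 0)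
    (he_norm : ∀ n : ℕ, ‖e n‖ = 1 ∨ e n = 0)
    (he_total : (Submodule.span ℂ (Set.range e)).topologicalClosure = ⊤)
    (θ : Set ℝ → ℕ → H)
    (hθ : ∀ A : Set ℝ, IsCompact A → ∀ (n : ℕ) (ψ : H),
        ⟪θ A n, ψ⟫_ℂ = ∫ s : ℝ, ⟪phiFn β A s • e n, (W ψ : Lp F 2 (volume : Measure ℝ)) s⟫_ℂ)
    (ι : Type*) [Preorder ι] [IsDirected ι (· ≤ ·)] [Nonempty ι]
    (xnet : ι → (H →L[ℂ] H)) (x : H →L[ℂ] H)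
    (hxpos : ∀ i, (xnet i).IsPositive)
    (hxmono : ∀ i j, i ≤ j → (xnet j - xnet i).IsPositive)
    (hxbdd : ∃ C : ℝ, ∀ i, ‖xnet i‖ ≤ C)
    (hub : ∀ i, (x - xnet i).IsPositive)
    (hlub : ∀ y : H →L[ℂ] H, (∀ i, (y - xnet i).IsPositive) → (y - x).IsPositive) :
    ⨆ i, weightPhi U θ (xnet i) = weightPhi U θ x := by
  classical
  obtain ⟨C, hC⟩ := hxbdd
  obtain ⟨y, hy_ub, hy_lim⟩ := netlimit xnet C hxmono hC
  have hyx := hlub y hy_ub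
  have hAmono : ∀ v : H, Monotone fun i => (⟪v, xnet i v⟫_ℂ).re :=
    fun v i j h => aux_mono (hxmono i j h) v
  have hAbdd : ∀ v : H, BddAbove (Set.range fun i => (⟪v, xnet i v⟫_ℂ).re) :=
    fun v => ⟨(⟪v, x v⟫_ℂ).re, Set.forall_mem_range.mpr fun i => aux_mono (hub i) v⟩
  have hsup : ∀ v : H, (⟪v, x v⟫_ℂ).re = ⨆ i, (⟪v, xnet i v⟫_ℂ).re := by
    intro v
    apply le_antisymm
    · have h1 : (⟪v, x v⟫_ℂ).re ≤ (⟪v, y v⟫_ℂ).re := aux_mono hyx v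
      have h2 : Tendsto (fun i => ⟪v, xnet i v⟫_ℂ) atTop (𝓝 (⟪v, y v⟫_ℂ)) :=
        tendsto_const_nhds.inner (hy_lim v)
      have h3 : Tendsto (fun i => (⟪v, xnet i v⟫_ℂ).re) atTop (𝓝 ((⟪v, y v⟫_ℂ).re)) :=
        (Complex.continuous_re.tendsto _).comp h2
      have h4 := tendsto_nhds_unique h3 (tendsto_atTop_ciSup (hAmono v) (hAbdd v))
      rw [← h4]; exact h1
    · exact ciSup_le fun i => aux_mono (hub i) v
  haveI : Nonempty H := ⟨0⟩
  set d := TopologicalSpace.denseSeq H with hd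
  have hdense : DenseRange d := TopologicalSpace.denseRange_denseSeq H
  have hbex : ∀ m k : ℕ, ∃ i, (⟪d m, x (d m)⟫_ℂ).re - 1 / ((k : ℝ) + 1)
      < (⟪d m, xnet i (d m)⟫_ℂ).re := by
    intro m k
    apply exists_lt_of_lt_ciSup
    rw [← hsup (d m)]
    have hpos1 : (0:ℝ) < 1 / ((k:ℝ) + 1) := by positivity
    linarith
  choose b hb using hbex
  have hstep : ∀ (p : ι) (k : ℕ), ∃ q, p ≤ q ∧ ∀ m, m ≤ k → b m k ≤ q := by
    intro p k
    obtain ⟨M, hM⟩ := Finset.exists_le (insert p ((Finset.range (k+1)).image fun m => b m k))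
    refine ⟨M, hM p (Finset.mem_insert_self _ _), fun m hm => hM _ ?_⟩
    exact Finset.mem_insert_of_mem
      (Finset.mem_image_of_mem _ (Finset.mem_range.mpr (Nat.lt_succ_of_le hm)))
  let j : ℕ → ι := fun k => Nat.rec (Classical.choose (hstep (Classical.arbitrary ι) 0))
      (fun k jk => Classical.choose (hstep jk (k+1))) k
  have hj0 : ∀ m, m ≤ 0 → b m 0 ≤ j 0 :=
    (Classical.choose_spec (hstep (Classical.arbitrary ι) 0)).2
  have hjsucc : ∀ k : ℕ, j k ≤ j (k+1) ∧ ∀ m, m ≤ k+1 → b m (k+1) ≤ j (k+1) :=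
    fun k => Classical.choose_spec (hstep (j k) (k+1))
  have hjmono : Monotone j := monotone_nat_of_le_succ fun k => (hjsucc k).1
  have hjb : ∀ m k, m ≤ k → b m k ≤ j k := by
    intro m k hm
    cases k with
    | zero => exact hj0 m hm
    | succ k => exact (hjsucc k).2 m hm
  obtain ⟨z, hz_ub, hz_lim⟩ := netlimit (fun k => xnet (j k)) C
    (fun k l h => hxmono _ _ (hjmono h)) (fun k => hC (j k))
  have hzmono : ∀ v : H, Monotone fun k => (⟪v, xnet (j k) v⟫_ℂ).re :=
    fun v k l h => aux_mono (hxmono _ _ (hjmono h)) v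
  have hzbdd : ∀ v : H, BddAbove (Set.range fun k => (⟪v, xnet (j k) v⟫_ℂ).re) :=
    fun v => ⟨(⟪v, x v⟫_ℂ).re, Set.forall_mem_range.mpr fun k => aux_mono (hub (j k)) v⟩
  have hzsup : ∀ v : H, (⟪v, z v⟫_ℂ).re = ⨆ k, (⟪v, xnet (j k) v⟫_ℂ).re := by
    intro v
    have h2 : Tendsto (fun k => ⟪v, xnet (j k) v⟫_ℂ) atTop (𝓝 (⟪v, z v⟫_ℂ)) :=
      tendsto_const_nhds.inner (hz_lim v)
    have h3 : Tendsto (fun k => (⟪v, xnet (j k) v⟫_ℂ).re) atTop (𝓝 ((⟪v, z v⟫_ℂ).re)) :=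
      (Complex.continuous_re.tendsto _).comp h2
    exact tendsto_nhds_unique h3 (tendsto_atTop_ciSup (hzmono v) (hzbdd v))
  have hzlex : ∀ v : H, (⟪v, z v⟫_ℂ).re ≤ (⟪v, x v⟫_ℂ).re := by
    intro v; rw [hzsup v]; exact ciSup_le fun k => aux_mono (hub (j k)) v
  have hxpos' : x.IsPositive := by
    have h := (hub (Classical.arbitrary ι)).add (hxpos (Classical.arbitrary ι))
    simpa using h
  have hzpos : z.IsPositive := by
    have h := (hz_ub 0).add (hxpos (j 0))
    simpa using h
  have hDpos : (x - z).IsPositive := aux_sub_pos hxpos' hzpos hzlex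
  have hxz : ∀ v : H, x v = z v := by
    have hEq : ∀ m : ℕ, (x - z) (d m) = 0 := by
      intro m
      have hge : (⟪d m, x (d m)⟫_ℂ).re ≤ (⟪d m, z (d m)⟫_ℂ).re := by
        have hf : Tendsto (fun k : ℕ => (⟪d m, x (d m)⟫_ℂ).re - 1 / ((k:ℝ)+1)) atTop
            (𝓝 ((⟪d m, x (d m)⟫_ℂ).re)) := by
          have hcst := tendsto_const_nhds (x := (⟪d m, x (d m)⟫_ℂ).re) (f := (atTop : Filter ℕ))
          have h0 := tendsto_one_div_add_atTop_nhds_zero_nat (𝕜 := ℝ)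
          simpa using hcst.sub h0
        have hgk : Tendsto (fun k => (⟪d m, xnet (j k) (d m)⟫_ℂ).re) atTop
            (𝓝 ((⟪d m, z (d m)⟫_ℂ).re)) :=
          (Complex.continuous_re.tendsto _).comp (tendsto_const_nhds.inner (hz_lim (d m)))
        refine le_of_tendsto_of_tendsto hf hgk (eventually_atTop.mpr ⟨m, fun k hk => ?_⟩)
        exact le_of_lt (lt_of_lt_of_le (hb m k) (aux_mono (hxmono _ _ (hjb m k hk)) (d m)))
      have h0 : (⟪d m, (x - z) (d m)⟫_ℂ).re = 0 := by
        have h1 := hzlex (d m)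
        simp only [ContinuousLinearMap.sub_apply, inner_sub_right, Complex.sub_re]
        linarith
      have hsq := aux_sq hDpos (d m)
      rw [h0, mul_zero] at hsq
      have h2 : ‖(x - z) (d m)‖ ^ 2 = 0 := le_antisymm hsq (by positivity)
      have h3 : ‖(x - z) (d m)‖ = 0 := by
        exact pow_eq_zero_iff (n := 2) (by norm_num) |>.mp h2
      exact norm_eq_zero.mp h3
    have hfun : ⇑(x - z) = fun _ => (0 : H) :=
      Continuous.ext_on hdense (x - z).continuous continuous_const
        (by rintro _ ⟨m, rfl⟩; exact hEq m)
    intro v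
    have h4 := congrFun hfun v
    rw [ContinuousLinearMap.sub_apply] at h4
    exact sub_eq_zero.mp h4
  -- translation to the star form
  have hstar : ∀ t : ℝ, star (U t) = U (-t) := by
    intro t
    have h1 : U t * U (-t) = 1 := by rw [← hUadd]; simpa using hU0
    have h2 : star (U t) * U t = 1 := (Unitary.mem_iff.mp (hUuni t)).1
    calc star (U t) = star (U t) * (U t * U (-t)) := by rw [h1, mul_one]
    _ = star (U t) * U t * U (-t) := by rw [mul_assoc]
    _ = U (-t) := by rw [h2, one_mul]
  have hrw : ∀ (y' : H →L[ℂ] H) (t : ℝ) (ψ : H),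
      ⟪ψ, (U t * y' * star (U t)) ψ⟫_ℂ = ⟪star (U t) ψ, y' (star (U t) ψ)⟫_ℂ := by
    intro y' t ψ
    conv_lhs => rw [ContinuousLinearMap.mul_apply, ContinuousLinearMap.mul_apply,
      ContinuousLinearMap.star_eq_adjoint, ← ContinuousLinearMap.adjoint_inner_left]
    rw [ContinuousLinearMap.star_eq_adjoint]
  have hwcont : ∀ ψ : H, Continuous fun t : ℝ => star (U t) ψ := by
    intro ψ
    have h1 : (fun t : ℝ => star (U t) ψ) = fun t => U (-t) ψ := funext fun t => by rw [hstar]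
    rw [h1]
    exact (hUcont ψ).comp continuous_neg
  have hform : ∀ v : H, (⟪v, x v⟫_ℂ).re = ⨆ k, (⟪v, xnet (j k) v⟫_ℂ).re := by
    intro v
    rw [show x v = z v from hxz v]
    exact hzsup v
  have hkey : ∀ (A : Set ℝ) (n : ℕ),
      (∫⁻ t : ℝ, ENNReal.ofReal ((⟪θ A n, (U t * x * star (U t)) (θ A n)⟫_ℂ).re))
        = ⨆ k, ∫⁻ t : ℝ,
            ENNReal.ofReal ((⟪θ A n, (U t * xnet (j k) * star (U t)) (θ A n)⟫_ℂ).re) := by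
    intro A n
    have hmeas : ∀ y' : H →L[ℂ] H, Measurable fun t : ℝ =>
        ENNReal.ofReal ((⟪θ A n, (U t * y' * star (U t)) (θ A n)⟫_ℂ).re) := by
      intro y'
      simp only [hrw]
      have hw := hwcont (θ A n)
      have hc : Continuous fun t : ℝ => ⟪star (U t) (θ A n), y' (star (U t) (θ A n))⟫_ℂ :=
        hw.inner (y'.continuous.comp hw)
      exact (ENNReal.continuous_ofReal.comp (Complex.continuous_re.comp hc)).measurable
    have hpt : ∀ t : ℝ, ENNReal.ofReal ((⟪θ A n, (U t * x * star (U t)) (θ A n)⟫_ℂ).re)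
        = ⨆ k, ENNReal.ofReal ((⟪θ A n, (U t * xnet (j k) * star (U t)) (θ A n)⟫_ℂ).re) := by
      intro t
      simp only [hrw]
      rw [hform (star (U t) (θ A n))]
      exact ofReal_ciSup_nat (hzmono _) (hzbdd _)
    rw [lintegral_congr hpt]
    rw [lintegral_iSup (fun k => hmeas (xnet (j k)))]
    exact fun k l hkl => fun t =>
      ENNReal.ofReal_le_ofReal (by
        simp only [hrw]
        exact aux_mono (hxmono _ _ (hjmono hkl)) _)
  apply le_antisymm
  · refine iSup_le fun i => ?_
    simp only [weightPhi]
    refine iSup_mono fun A => iSup_mono fun N => Finset.sum_le_sum fun n _ => ?_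
    refine lintegral_mono fun t => ENNReal.ofReal_le_ofReal ?_
    simp only [hrw]
    exact aux_mono (hub i) _
  · simp only [weightPhi]
    refine iSup_le fun A => iSup_le fun N => ?_
    calc (∑ n ∈ Finset.range N, ∫⁻ t : ℝ,
          ENNReal.ofReal ((⟪θ A.1 n, (U t * x * star (U t)) (θ A.1 n)⟫_ℂ).re))
        = ∑ n ∈ Finset.range N, ⨆ k, ∫⁻ t : ℝ,
          ENNReal.ofReal ((⟪θ A.1 n, (U t * xnet (j k) * star (U t)) (θ A.1 n)⟫_ℂ).re) :=
          Finset.sum_congr rfl fun n _ => hkey A.1 n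
    _ = ⨆ k, ∑ n ∈ Finset.range N, ∫⁻ t : ℝ,
          ENNReal.ofReal ((⟪θ A.1 n, (U t * xnet (j k) * star (U t)) (θ A.1 n)⟫_ℂ).re) := by
          refine ENNReal.finsetSum_iSup_of_monotone fun n => ?_
          exact fun k l hkl => lintegral_mono fun t =>
            ENNReal.ofReal_le_ofReal (by
              simp only [hrw]
              exact aux_mono (hxmono _ _ (hjmono hkl)) _)
    _ ≤ ⨆ i, weightPhi U θ (xnet i) := by
          refine iSup_le fun k => ?_
          refine le_trans ?_ (le_iSup _ (j k))
          simp only [weightPhi]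
          exact le_iSup_of_le A (le_iSup_of_le N le_rfl)
end
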